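/- Let g_1 ≥ g_2 > 0 and ρ > 0. The two-user superposition rate region R* = {(R_1,R_2) : ∃ γ ∈ [0,1], R_1 ≤ log(1 + g_1 γ ρ), R_2 ≤ log(1 + g_2(1-γ)ρ/(g_2 γ ρ + 1))} contains the time-sharing region R^td = {(R_1,R_2) : ∃ μ ∈ [0,1], ∃ η_1, η_2 ≥ 0 with μη_1 + (1-μ)η_2 = 1, R_1 ≤ μ log(1 + g_1 η_1 ρ), R_2 ≤ (1-μ) log(1 + g_2 η_2 ρ)}. -/

import Mathlib

/-- The two-user superposition rate region contains the time-sharing-with-power-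
allocation region when g_1 ≥ g_2 > 0. -/
theorem superposition_region_contains_time_sharing
    (g1 g2 ρ : ℝ) (hg12 : g2 ≤ g1) (hg2 : 0 < g2) (hρ : 0 < ρ)
    (R1 R2 : ℝ)
    (hTD : ∃ μ ∈ Set.Icc (0 : ℝ) 1, ∃ η1 η2 : ℝ, 0 ≤ η1 ∧ 0 ≤ η2 ∧
      μ * η1 + (1 - μ) * η2 = 1 ∧
      R1 ≤ μ * Real.log (1 + g1 * η1 * ρ) ∧
      R2 ≤ (1 - μ) * Real.log (1 + g2 * η2 * ρ)) :
    ∃ γ ∈ Set.Icc (0 : ℝ) 1,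
      R1 ≤ Real.log (1 + g1 * γ * ρ) ∧
      R2 ≤ Real.log (1 + g2 * (1 - γ) * ρ / (g2 * γ * ρ + 1)) := by
  obtain ⟨μ, ⟨hμ0, hμ1⟩, η1, η2, hη1, hη2, hsum, hR1, hR2⟩ := hTD
  have hg1 : 0 < g1 := lt_of_lt_of_le hg2 hg12
  set x : ℝ := g1 * η1 * ρ with hxdef
  have hx : 0 ≤ x := by positivity
  set A : ℝ := (1 + x) ^ μ with hAdef
  have hx1 : (1 : ℝ) ≤ 1 + x := by linarith
  have hA1 : (1 : ℝ) ≤ A := by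
    have := Real.rpow_le_rpow_of_exponent_le hx1 hμ0
    rwa [Real.rpow_zero] at this
  -- Bernoulli: A ≤ 1 + μ * x
  have hBern : A ≤ 1 + μ * x :=
    rpow_one_add_le_one_add_mul_self (by linarith) hμ0 hμ1
  have hμη1 : μ * η1 ≤ 1 := by nlinarith
  set γ : ℝ := (A - 1) / (g1 * ρ) with hγdef
  have hg1ρ : 0 < g1 * ρ := by positivity
  have hγρ : g1 * γ * ρ = A - 1 := by
    rw [hγdef]; field_simp
  have hγ0 : 0 ≤ γ := div_nonneg (by linarith) hg1ρ.le
  have hγ1 : γ ≤ 1 := by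
    rw [hγdef, div_le_one hg1ρ]
    have : μ * x ≤ g1 * ρ := by
      rw [hxdef]; nlinarith
    linarith
  refine ⟨γ, ⟨hγ0, hγ1⟩, ?_, ?_⟩
  · -- R1 bound
    have : μ * Real.log (1 + x) = Real.log A := by
      rw [hAdef, Real.log_rpow (by linarith)]
    rw [hγρ]
    calc R1 ≤ μ * Real.log (1 + x) := hR1
      _ = Real.log A := this
      _ = Real.log (1 + (A - 1)) := by ring_nf
  · -- R2 bound
    set B : ℝ := (1 + g2 * η2 * ρ) ^ (1 - μ) with hBdef
    set C : ℝ := (1 + g2 * η1 * ρ) ^ μ with hCdef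
    have hb1 : (1 : ℝ) ≤ 1 + g2 * η2 * ρ := by
      have : 0 ≤ g2 * η2 * ρ := by positivity
      linarith
    have hc1 : (1 : ℝ) ≤ 1 + g2 * η1 * ρ := by
      have : 0 ≤ g2 * η1 * ρ := by positivity
      linarith
    have hB1 : (1 : ℝ) ≤ B := by
      have := Real.rpow_le_rpow_of_exponent_le hb1 (by linarith : (0:ℝ) ≤ 1 - μ)
      rwa [Real.rpow_zero] at this
    -- concavity: 1 + g2 * γ * ρ ≤ C
    have hg2γρ : g2 * γ * ρ = (g2 / g1) * (A - 1) := by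
      rw [hγdef]; field_simp
    have hDC : 1 + g2 * γ * ρ ≤ C := by
      have hconc := Real.concaveOn_rpow hμ0 hμ1
      set t : ℝ := g2 / g1 with htdef
      have ht0 : 0 ≤ t := by positivity
      have ht1 : t ≤ 1 := (div_le_one hg1).2 hg12
      have hcomb := hconc.2 (Set.mem_Ici.2 (by norm_num : (0:ℝ) ≤ 1))
        (Set.mem_Ici.2 (by linarith : (0:ℝ) ≤ 1 + x))
        (by linarith : (0:ℝ) ≤ 1 - t) ht0 (by ring)
      have harg : (1 - t) * 1 + t * (1 + x) = 1 + g2 * η1 * ρ := by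
        rw [hxdef, htdef]; field_simp; ring
      simp only [smul_eq_mul] at hcomb
      rw [harg] at hcomb
      simp only [Real.one_rpow] at hcomb
      rw [hg2γρ, htdef]
      calc 1 + g2 / g1 * (A - 1) = (1 - g2 / g1) * 1 + g2 / g1 * A := by ring
        _ ≤ C := by rw [hCdef]; exact hcomb
    -- AM-GM: C * B ≤ 1 + g2 * ρ
    have hCB : C * B ≤ 1 + g2 * ρ := by
      have := Real.geom_mean_le_arith_mean2_weighted hμ0 (by linarith : (0:ℝ) ≤ 1 - μ)
        (by linarith : (0:ℝ) ≤ 1 + g2 * η1 * ρ) (by linarith : (0:ℝ) ≤ 1 + g2 * η2 * ρ)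
        (by ring)
      calc C * B ≤ μ * (1 + g2 * η1 * ρ) + (1 - μ) * (1 + g2 * η2 * ρ) := this
        _ = 1 + g2 * ρ * (μ * η1 + (1 - μ) * η2) := by ring
        _ = 1 + g2 * ρ := by rw [hsum]; ring
    have hD0 : 0 < g2 * γ * ρ + 1 := by positivity
    have key : B ≤ 1 + g2 * (1 - γ) * ρ / (g2 * γ * ρ + 1) := by
      have expand : 1 + g2 * (1 - γ) * ρ / (g2 * γ * ρ + 1)
          = (1 + g2 * ρ) / (g2 * γ * ρ + 1) := by field_simp; ring
      rw [expand, le_div_iff₀ hD0]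
      have hBD : B * (g2 * γ * ρ + 1) ≤ C * B := by
        calc B * (g2 * γ * ρ + 1) ≤ B * C :=
              mul_le_mul_of_nonneg_left (by linarith) (by linarith)
          _ = C * B := mul_comm _ _
      linarith
    calc R2 ≤ (1 - μ) * Real.log (1 + g2 * η2 * ρ) := hR2
      _ = Real.log B := by rw [hBdef, Real.log_rpow (by linarith)]
      _ ≤ Real.log (1 + g2 * (1 - γ) * ρ / (g2 * γ * ρ + 1)) :=
          Real.log_le_log (by linarith) key
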